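/- Let A be an n×n complex matrix such that every eigenvalue of A has negative real part, and let C be a nonzero 1×n complex row vector with A + A* + C*C = 0 (so A + A* has rank one). Let φ be a finite Blaschke product of degree strictly less than n, and let x be a nonzero vector in ℂⁿ satisfying x = φ(−A*)*φ(−A*)x. Then for every complex s with Re(s) > 0, the scalar identity φ(s)·C(sI − A)^{-1}x = C(sI − A)^{-1}φ(−A*)x holds. -/

import Mathlib

open Matrix

/-- Evaluation of the finite Blaschke product with data `(ρ, α)` at a complex
number `s`: `ρ * ∏ k (s + conj (α k)) / (s - α k)`. -/
noncomputable def blaschkeEval {d : ℕ} (ρ : ℂ) (α : Fin d → ℂ) (s : ℂ) : ℂ :=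
  ρ * ∏ k : Fin d, (s + starRingEnd ℂ (α k)) / (s - α k)

/-- Evaluation of the finite Blaschke product with data `(ρ, α)` at a square
complex matrix `M`: `ρ • ∏ k (M + conj (α k) • 1) * (M - α k • 1)⁻¹`. -/
noncomputable def blaschkeEvalM {n d : ℕ} (ρ : ℂ) (α : Fin d → ℂ)
    (M : Matrix (Fin n) (Fin n) ℂ) : Matrix (Fin n) (Fin n) ℂ :=
  ρ • (List.ofFn fun k : Fin d =>
      (M + (starRingEnd ℂ (α k)) • (1 : Matrix (Fin n) (Fin n) ℂ)) *
        (M - (α k) • (1 : Matrix (Fin n) (Fin n) ℂ))⁻¹).prod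

namespace Stmt6Aux

variable {n : ℕ}

noncomputable def fac (B : Matrix (Fin n) (Fin n) ℂ) (a : ℂ) : Matrix (Fin n) (Fin n) ℂ :=
  (B + (starRingEnd ℂ a) • (1 : Matrix (Fin n) (Fin n) ℂ)) *
    (B - a • (1 : Matrix (Fin n) (Fin n) ℂ))⁻¹

noncomputable def nsq (v : Matrix (Fin n) (Fin 1) ℂ) : ℝ := ((vᴴ * v) 0 0).re

lemma nsq_eq (v : Matrix (Fin n) (Fin 1) ℂ) : nsq v = ∑ j, Complex.normSq (v j 0) := by
  simp only [nsq, Matrix.mul_apply, Matrix.conjTranspose_apply, Complex.re_sum]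
  refine Finset.sum_congr rfl fun j _ => ?_
  simp [Complex.star_def, mul_comm, Complex.mul_conj]

lemma nsq_nonneg (v : Matrix (Fin n) (Fin 1) ℂ) : 0 ≤ nsq v := by
  rw [nsq_eq]; exact Finset.sum_nonneg fun j _ => Complex.normSq_nonneg _

lemma nsq_eq_zero {v : Matrix (Fin n) (Fin 1) ℂ} (h : nsq v = 0) : v = 0 := by
  rw [nsq_eq] at h
  have := (Finset.sum_eq_zero_iff_of_nonneg (fun j _ => Complex.normSq_nonneg (v j 0))).mp h
  ext i j
  have hj : j = 0 := Subsingleton.elim _ _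
  subst hj
  simpa [Complex.normSq_eq_zero] using this i (Finset.mem_univ i)

lemma step (B : Matrix (Fin n) (Fin n) ℂ) (C : Matrix (Fin 1) (Fin n) ℂ)
    (hBC : B + Bᴴ = Cᴴ * C) (a : ℂ) (ha : IsUnit (B - a • (1 : Matrix (Fin n) (Fin n) ℂ)).det)
    (z : Matrix (Fin n) (Fin 1) ℂ) :
    nsq (fac B a * z) =
      nsq z + 2 * a.re * nsq (C * ((B - a • (1 : Matrix (Fin n) (Fin n) ℂ))⁻¹ * z)) := by
  set c := starRingEnd ℂ a with hc
  set u := (B - a • (1 : Matrix (Fin n) (Fin n) ℂ))⁻¹ * z with hu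
  have hz : (B - a • (1 : Matrix (Fin n) (Fin n) ℂ)) * u = z :=
    Matrix.mul_nonsing_inv_cancel_left _ _ ha
  have hfz : fac B a * z = (B + c • 1) * u := by
    rw [fac, Matrix.mul_assoc]
  have mid : (B + c • (1 : Matrix (Fin n) (Fin n) ℂ))ᴴ * (B + c • 1) =
      (B - a • (1 : Matrix (Fin n) (Fin n) ℂ))ᴴ * (B - a • 1) + (a + c) • (Cᴴ * C) := by
    rw [← hBC, hc]
    simp only [conjTranspose_add, conjTranspose_sub, conjTranspose_smul, conjTranspose_one,
      Complex.star_def, Complex.conj_conj, add_mul, mul_add, sub_mul, mul_sub,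
      Matrix.smul_mul, Matrix.mul_smul, smul_smul, mul_one, one_mul]
    module
  have e1 : (fac B a * z)ᴴ * (fac B a * z) =
      uᴴ * (((B + c • (1 : Matrix (Fin n) (Fin n) ℂ))ᴴ * (B + c • 1)) * u) := by
    rw [hfz, conjTranspose_mul, Matrix.mul_assoc, ← Matrix.mul_assoc ((B + c • 1)ᴴ)]
  have e2 : zᴴ * z =
      uᴴ * (((B - a • (1 : Matrix (Fin n) (Fin n) ℂ))ᴴ * (B - a • 1)) * u) := by
    rw [← hz, conjTranspose_mul, Matrix.mul_assoc, ← Matrix.mul_assoc ((B - a • 1)ᴴ)]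
  have e3 : (C * u)ᴴ * (C * u) = uᴴ * ((Cᴴ * C) * u) := by
    rw [conjTranspose_mul, Matrix.mul_assoc, ← Matrix.mul_assoc Cᴴ]
  have key : (fac B a * z)ᴴ * (fac B a * z) =
      zᴴ * z + (a + c) • ((C * u)ᴴ * (C * u)) := by
    rw [e1, e2, e3, mid, Matrix.add_mul, Matrix.mul_add, Matrix.smul_mul, Matrix.mul_smul]
  have hre : (a + c) = ((2 * a.re : ℝ) : ℂ) := Complex.add_conj a
  have hk := congrArg (fun M : Matrix (Fin 1) (Fin 1) ℂ => (M 0 0).re) key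
  simp only [Matrix.add_apply, Matrix.smul_apply, hre, smul_eq_mul, Complex.add_re,
    Complex.re_ofReal_mul] at hk
  simp only [nsq]
  rw [hk]

variable (A : Matrix (Fin n) (Fin n) ℂ) (C : Matrix (Fin 1) (Fin n) ℂ) (s : ℂ)

lemma key1 (hd : A + Aᴴ = -(Cᴴ * C))
    (hs : IsUnit (s • (1 : Matrix (Fin n) (Fin n) ℂ) - A).det) :
    C * (s • (1 : Matrix (Fin n) (Fin n) ℂ) - A)⁻¹ * (s • 1 + Aᴴ) =
      C - (C * (s • (1 : Matrix (Fin n) (Fin n) ℂ) - A)⁻¹ * Cᴴ) * C := by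
  have h1 : (s • (1 : Matrix (Fin n) (Fin n) ℂ)) + Aᴴ = (s • 1 - A) + (A + Aᴴ) := by abel
  rw [h1, Matrix.mul_add]
  rw [show C * (s • (1 : Matrix (Fin n) (Fin n) ℂ) - A)⁻¹ * (s • 1 - A) = C by
    rw [Matrix.mul_assoc, Matrix.nonsing_inv_mul _ hs, Matrix.mul_one]]
  rw [hd, Matrix.mul_neg, ← sub_eq_add_neg]
  congr 1
  simp only [Matrix.mul_assoc]

lemma intertwine (hd : A + Aᴴ = -(Cᴴ * C))
    (hs : IsUnit (s • (1 : Matrix (Fin n) (Fin n) ℂ) - A).det)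
    (a : ℂ) (ha : IsUnit ((-Aᴴ) - a • (1 : Matrix (Fin n) (Fin n) ℂ)).det)
    (hsa : s - a ≠ 0) (z : Matrix (Fin n) (Fin 1) ℂ)
    (hz : C * (((-Aᴴ) - a • (1 : Matrix (Fin n) (Fin n) ℂ))⁻¹ * z) = 0) :
    C * (s • (1 : Matrix (Fin n) (Fin n) ℂ) - A)⁻¹ * (fac (-Aᴴ) a * z) =
      ((s + starRingEnd ℂ a) / (s - a)) •
        (C * (s • (1 : Matrix (Fin n) (Fin n) ℂ) - A)⁻¹ * z) := by
  set F := C * (s • (1 : Matrix (Fin n) (Fin n) ℂ) - A)⁻¹ with hF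
  set G := ((-Aᴴ) - a • (1 : Matrix (Fin n) (Fin n) ℂ))⁻¹ with hG
  set Θ := C * (s • (1 : Matrix (Fin n) (Fin n) ℂ) - A)⁻¹ * Cᴴ with hT
  set c := starRingEnd ℂ a with hc
  have k1 : F * (s • (1 : Matrix (Fin n) (Fin n) ℂ) + Aᴴ) = C - Θ * C := key1 A C s hd hs
  have h1 : F * ((-Aᴴ) + c • (1 : Matrix (Fin n) (Fin n) ℂ)) = (s + c) • F - (C - Θ * C) := by
    have : (-Aᴴ) + c • (1 : Matrix (Fin n) (Fin n) ℂ) =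
        (s + c) • 1 - (s • 1 + Aᴴ) := by
      rw [add_smul]; abel
    rw [this, Matrix.mul_sub, Matrix.mul_smul, Matrix.mul_one, k1]
  have h2 : F * ((-Aᴴ) - a • (1 : Matrix (Fin n) (Fin n) ℂ)) = (s - a) • F - (C - Θ * C) := by
    have : (-Aᴴ) - a • (1 : Matrix (Fin n) (Fin n) ℂ) =
        (s - a) • 1 - (s • 1 + Aᴴ) := by
      rw [sub_smul]; abel
    rw [this, Matrix.mul_sub, Matrix.mul_smul, Matrix.mul_one, k1]
  have h3 : F * z = (s - a) • (F * (G * z)) - (C - Θ * C) * (G * z) := by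
    calc F * z = F * (((-Aᴴ) - a • (1 : Matrix (Fin n) (Fin n) ℂ)) * (G * z)) := by
          conv_rhs => rw [Matrix.mul_nonsing_inv_cancel_left _ _ ha]
      _ = (F * ((-Aᴴ) - a • (1 : Matrix (Fin n) (Fin n) ℂ))) * (G * z) := by
          simp only [Matrix.mul_assoc]
      _ = (s - a) • (F * (G * z)) - (C - Θ * C) * (G * z) := by
          rw [h2, Matrix.sub_mul, Matrix.smul_mul, Matrix.mul_assoc]
  have hCGz : (C - Θ * C) * (G * z) = 0 := by
    rw [Matrix.sub_mul, hz, Matrix.mul_assoc, hz, Matrix.mul_zero, sub_zero]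
  rw [hCGz, sub_zero] at h3
  have h4 : F * (G * z) = (s - a)⁻¹ • (F * z) := by
    rw [h3, smul_smul, inv_mul_cancel₀ hsa, one_smul]
  have hfacz : fac (-Aᴴ) a * z = ((-Aᴴ) + c • (1 : Matrix (Fin n) (Fin n) ℂ)) * (G * z) := by
    rw [fac, Matrix.mul_assoc]
  rw [hfacz, ← Matrix.mul_assoc F, h1, Matrix.sub_mul, Matrix.smul_mul, hCGz, sub_zero,
    h4, smul_smul, div_eq_mul_inv]

lemma nsq_prod_le (B : Matrix (Fin n) (Fin n) ℂ) (C : Matrix (Fin 1) (Fin n) ℂ)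
    (hBC : B + Bᴴ = Cᴴ * C) (l : List ℂ)
    (hl : ∀ a ∈ l, a.re < 0 ∧ IsUnit (B - a • (1 : Matrix (Fin n) (Fin n) ℂ)).det)
    (v : Matrix (Fin n) (Fin 1) ℂ) :
    nsq ((l.map (fac B)).prod * v) ≤ nsq v := by
  induction l with
  | nil => simp
  | cons a t ih =>
    have ha := hl a List.mem_cons_self
    have hstep := step B C hBC a ha.2 ((t.map (fac B)).prod * v)
    have hterm : 2 * a.re * nsq (C * ((B - a • (1 : Matrix (Fin n) (Fin n) ℂ))⁻¹ *
        ((t.map (fac B)).prod * v))) ≤ 0 :=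
      mul_nonpos_of_nonpos_of_nonneg (by linarith [ha.1]) (nsq_nonneg _)
    have iht := ih (fun b hb => hl b (List.mem_cons_of_mem a hb))
    calc nsq (((a :: t).map (fac B)).prod * v)
        = nsq (fac B a * ((t.map (fac B)).prod * v)) := by
          rw [List.map_cons, List.prod_cons, Matrix.mul_assoc]
      _ ≤ nsq ((t.map (fac B)).prod * v) := by rw [hstep]; linarith
      _ ≤ nsq v := iht

lemma main (A : Matrix (Fin n) (Fin n) ℂ) (C : Matrix (Fin 1) (Fin n) ℂ) (s : ℂ)
    (hd : A + Aᴴ = -(Cᴴ * C))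
    (hs : IsUnit (s • (1 : Matrix (Fin n) (Fin n) ℂ) - A).det)
    (l : List ℂ)
    (hl : ∀ a ∈ l, a.re < 0 ∧ IsUnit ((-Aᴴ) - a • (1 : Matrix (Fin n) (Fin n) ℂ)).det ∧
      s - a ≠ 0)
    (x : Matrix (Fin n) (Fin 1) ℂ)
    (hnx : nsq ((l.map (fac (-Aᴴ))).prod * x) = nsq x) :
    C * (s • (1 : Matrix (Fin n) (Fin n) ℂ) - A)⁻¹ * ((l.map (fac (-Aᴴ))).prod * x) =
      (l.map (fun a => (s + starRingEnd ℂ a) / (s - a))).prod •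
        (C * (s • (1 : Matrix (Fin n) (Fin n) ℂ) - A)⁻¹ * x) := by
  have hBC : (-Aᴴ) + (-Aᴴ)ᴴ = Cᴴ * C := by
    rw [conjTranspose_neg, conjTranspose_conjTranspose, ← neg_add, add_comm Aᴴ A, hd, neg_neg]
  induction l with
  | nil => simp
  | cons a t ih =>
    have ha := hl a List.mem_cons_self
    have hlt : ∀ b ∈ t, b.re < 0 ∧ IsUnit ((-Aᴴ) - b • (1 : Matrix (Fin n) (Fin n) ℂ)).det ∧
        s - b ≠ 0 := fun b hb => hl b (List.mem_cons_of_mem a hb)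
    set z := (t.map (fac (-Aᴴ))).prod * x with hzdef
    have hcons : ((a :: t).map (fac (-Aᴴ))).prod * x = fac (-Aᴴ) a * z := by
      rw [List.map_cons, List.prod_cons, Matrix.mul_assoc]
    have hstep := step (-Aᴴ) C hBC a ha.2.1 z
    have hle1 : nsq z ≤ nsq x :=
      nsq_prod_le (-Aᴴ) C hBC t (fun b hb => ⟨(hlt b hb).1, (hlt b hb).2.1⟩) x
    rw [hcons] at hnx
    -- nsq x = nsq z + 2 a.re * q, q ≥ 0, 2 a.re < 0, nsq z ≤ nsq x
    have hq0 : nsq (C * (((-Aᴴ) - a • (1 : Matrix (Fin n) (Fin n) ℂ))⁻¹ * z)) = 0 := by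
      nlinarith [nsq_nonneg (C * (((-Aᴴ) - a • (1 : Matrix (Fin n) (Fin n) ℂ))⁻¹ * z)), ha.1]
    have hznsq : nsq z = nsq x := by
      rw [← hnx, hstep, hq0]; ring
    have hCz : C * (((-Aᴴ) - a • (1 : Matrix (Fin n) (Fin n) ℂ))⁻¹ * z) = 0 :=
      nsq_eq_zero hq0
    have iht := ih hlt hznsq
    rw [hcons, List.map_cons, List.prod_cons, ← Matrix.mul_assoc,
      Matrix.mul_assoc _ (fac (-Aᴴ) a) z]
    rw [show C * (s • (1 : Matrix (Fin n) (Fin n) ℂ) - A)⁻¹ * (fac (-Aᴴ) a * z) =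
        ((s + starRingEnd ℂ a) / (s - a)) •
          (C * (s • (1 : Matrix (Fin n) (Fin n) ℂ) - A)⁻¹ * z) from
      intertwine A C s hd hs a ha.2.1 ha.2.2 z hCz]
    rw [Matrix.mul_assoc] at iht
    rw [Matrix.mul_assoc C, iht, smul_smul]

end Stmt6Aux

open Stmt6Aux in
theorem stmt_6 {n d : ℕ}
    (A : Matrix (Fin n) (Fin n) ℂ)
    (hstab : ∀ z ∈ spectrum ℂ A, z.re < 0)
    (C : Matrix (Fin 1) (Fin n) ℂ) (hC : C ≠ 0)
    (hdiss : A + Aᴴ + Cᴴ * C = 0)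
    (ρ : ℂ) (hρ : ‖ρ‖ = 1)
    (α : Fin d → ℂ) (hα : ∀ k, (α k).re < 0)
    (hdeg : d < n)
    (x : Matrix (Fin n) (Fin 1) ℂ) (hx : x ≠ 0)
    (hfix : x = (blaschkeEvalM ρ α (-Aᴴ))ᴴ * blaschkeEvalM ρ α (-Aᴴ) * x) :
    ∀ s : ℂ, 0 < s.re →
      blaschkeEval ρ α s • (C * (s • (1 : Matrix (Fin n) (Fin n) ℂ) - A)⁻¹ * x) =
        C * (s • (1 : Matrix (Fin n) (Fin n) ℂ) - A)⁻¹ * blaschkeEvalM ρ α (-Aᴴ) * x := by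
  intro s hs0
  have hd : A + Aᴴ = -(Cᴴ * C) := by
    rw [← sub_eq_zero]; rw [sub_neg_eq_add]; exact hdiss
  -- invertibility of s•1 - A
  have hunit : ∀ w : ℂ, 0 < w.re → IsUnit (w • (1 : Matrix (Fin n) (Fin n) ℂ) - A) := by
    intro w hw
    have hw' : w ∉ spectrum ℂ A := fun h => absurd (hstab w h) (by linarith)
    have := spectrum.notMem_iff.mp hw'
    rwa [Algebra.algebraMap_eq_smul_one] at this
  have hs : IsUnit (s • (1 : Matrix (Fin n) (Fin n) ℂ) - A).det :=
    (Matrix.isUnit_iff_isUnit_det _).mp (hunit s hs0)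
  -- invertibility of -Aᴴ - a•1 for Re a < 0
  have hB : ∀ a : ℂ, a.re < 0 →
      IsUnit ((-Aᴴ) - a • (1 : Matrix (Fin n) (Fin n) ℂ)).det := by
    intro a ha
    have h1 : ((-Aᴴ) - a • (1 : Matrix (Fin n) (Fin n) ℂ)) =
        ((-(starRingEnd ℂ a)) • (1 : Matrix (Fin n) (Fin n) ℂ) - A)ᴴ := by
      rw [conjTranspose_sub, conjTranspose_smul, conjTranspose_one]
      simp [Complex.star_def, sub_eq_add_neg, add_comm]
    have h2 : IsUnit ((-(starRingEnd ℂ a)) • (1 : Matrix (Fin n) (Fin n) ℂ) - A) :=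
      hunit _ (by simp [Complex.neg_re, Complex.conj_re]; linarith)
    rw [h1, Matrix.det_conjTranspose]
    exact ((Matrix.isUnit_iff_isUnit_det _).mp h2).star
  -- the list
  set l := List.ofFn α with hldef
  have hlprop : ∀ a ∈ l, a.re < 0 ∧
      IsUnit ((-Aᴴ) - a • (1 : Matrix (Fin n) (Fin n) ℂ)).det ∧ s - a ≠ 0 := by
    intro a hal
    obtain ⟨k, rfl⟩ := List.mem_ofFn.mp hal
    have h1 := hα k
    refine ⟨h1, hB _ h1, ?_⟩
    intro h
    have : (s - α k).re = 0 := by rw [h]; simp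
    rw [Complex.sub_re] at this
    linarith
  set P := (l.map (fac (-Aᴴ))).prod with hPdef
  have hPM : blaschkeEvalM ρ α (-Aᴴ) = ρ • P := by
    rw [blaschkeEvalM, hPdef, hldef, List.map_ofFn]
    rfl
  -- from hfix: x = Pᴴ * P * x
  have hρ1 : (starRingEnd ℂ ρ) * ρ = 1 := by
    have h1 : Complex.normSq ρ = 1 := by rw [← Complex.sq_norm, hρ]; norm_num
    rw [mul_comm, Complex.mul_conj, h1, Complex.ofReal_one]
  have hfix' : x = Pᴴ * P * x := by
    calc x = (blaschkeEvalM ρ α (-Aᴴ))ᴴ * blaschkeEvalM ρ α (-Aᴴ) * x := hfix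
      _ = ((starRingEnd ℂ ρ) * ρ) • (Pᴴ * P) * x := by
          rw [hPM, conjTranspose_smul, Matrix.smul_mul, Matrix.mul_smul, smul_smul,
            Complex.star_def]
      _ = Pᴴ * P * x := by rw [hρ1, one_smul]
  have hnx : nsq (P * x) = nsq x := by
    have e : (P * x)ᴴ * (P * x) = xᴴ * x := by
      rw [conjTranspose_mul, Matrix.mul_assoc, ← Matrix.mul_assoc Pᴴ, ← hfix']
    rw [nsq, nsq, e]
  have hmain := main A C s hd hs l hlprop x hnx
  -- assemble
  have hbprod : blaschkeEval ρ α s =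
      ρ * (l.map (fun a => (s + starRingEnd ℂ a) / (s - a))).prod := by
    rw [blaschkeEval, hldef, List.map_ofFn]
    rw [List.prod_ofFn]
    rfl
  rw [← hPdef] at hmain
  rw [hPM, hbprod, Matrix.mul_smul, Matrix.smul_mul,
    Matrix.mul_assoc (C * (s • (1 : Matrix (Fin n) (Fin n) ℂ) - A)⁻¹) P x, hmain, smul_smul]
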